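/- Let b, a : [0,∞) → ℝ be bounded continuous functions with a(s) ≥ 0 for all s ≥ 0, and suppose there exists γ > 0 such that liminf_{t→∞} ∫_t^{t+γ} a(s) ds > 0. Then there exists a constant M > 0 such that every differentiable function z : [0,∞) → (0,∞) satisfying z'(t) = z(t)(b(t) − a(t)z(t)) for all t ≥ 0 obeys limsup_{t→∞} z(t) ≤ M. (This ultimate-boundedness property of the nonautonomous logistic ODE, Lemma 1 of Teng and Li, is the key ingredient in the proof of Theorem 3.1 of the paper; note that M is uniform over all positive solutions.) -/

import Mathlib

open Filter MeasureTheory Set intervalIntegral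

/-- Ultimate boundedness for the nonautonomous logistic ODE (Lemma 1 of Teng–Li):
under (H₁) there is a uniform `M > 0` with `limsup_{t→∞} z(t) ≤ M` for every positive
solution `z`. -/
theorem stmt_13 (b a : ℝ → ℝ)
    (hb_cont : ContinuousOn b (Set.Ici (0 : ℝ)))
    (ha_cont : ContinuousOn a (Set.Ici (0 : ℝ)))
    (hb_bdd : ∃ C : ℝ, ∀ t ≥ (0 : ℝ), |b t| ≤ C)
    (ha_bdd : ∃ C : ℝ, ∀ t ≥ (0 : ℝ), |a t| ≤ C)
    (ha_nonneg : ∀ s ≥ (0 : ℝ), 0 ≤ a s)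
    (γ : ℝ) (hγ : 0 < γ)
    (hH1 : 0 < Filter.liminf (fun t => ∫ s in t..(t + γ), a s) Filter.atTop) :
    ∃ M > (0 : ℝ), ∀ z : ℝ → ℝ,
      (∀ t ≥ (0 : ℝ), 0 < z t) →
      (∀ t ≥ (0 : ℝ), HasDerivAt z (z t * (b t - a t * z t)) t) →
      Filter.limsup z Filter.atTop ≤ M := by
  obtain ⟨C, hC⟩ := hb_bdd
  obtain ⟨Ca, hCa⟩ := ha_bdd
  have hC0 : 0 ≤ C := (abs_nonneg _).trans (hC 0 le_rfl)
  -- integrability of `a` on subintervals of `[0, ∞)`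
  have hInt_a : ∀ s t : ℝ, 0 ≤ s → s ≤ t → IntervalIntegrable a volume s t := by
    intro s t hs hst
    apply ContinuousOn.intervalIntegrable
    apply ha_cont.mono
    rw [uIcc_of_le hst]
    exact fun x hx => le_trans hs hx.1
  -- choose α and T with ∫_t^{t+γ} a ≥ α for t ≥ T
  set L := Filter.liminf (fun t => ∫ s in t..(t + γ), a s) Filter.atTop with hL
  have hbdd : Filter.IsBoundedUnder (· ≥ ·) Filter.atTop
      (fun t => ∫ s in t..(t + γ), a s) := by
    refine ⟨-(Ca * γ), Filter.eventually_map.mpr ?_⟩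
    filter_upwards [Filter.eventually_ge_atTop (0 : ℝ)] with t ht
    have h1 : |∫ s in t..(t + γ), a s| ≤ Ca * γ := by
      have := intervalIntegral.norm_integral_le_of_norm_le_const
        (C := Ca) (f := a) (a := t) (b := t + γ) ?_
      · simpa [abs_of_nonneg hγ.le] using this
      · intro x hx
        rw [uIoc_of_le (by linarith)] at hx
        exact hCa x (le_trans ht hx.1.le)
    simp only [ge_iff_le]
    linarith [abs_le.mp h1 |>.1]
  have hhalf : (0 : ℝ) < L / 2 := by positivity
  have hev : ∀ᶠ t in Filter.atTop, L / 2 < ∫ s in t..(t + γ), a s :=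
    Filter.eventually_lt_of_lt_liminf (by linarith) hbdd
  obtain ⟨T₀, hT₀⟩ := Filter.eventually_atTop.mp hev
  set T : ℝ := max T₀ 0 with hTdef
  have hT0 : (0 : ℝ) ≤ T := le_max_right _ _
  set α : ℝ := L / 2 with hα
  have hTprop : ∀ t ≥ T, α ≤ ∫ s in t..(t + γ), a s := fun t ht =>
    (hT₀ t (le_trans (le_max_left _ _) ht)).le
  -- the constants
  set M : ℝ := (1 + C * γ) / α with hM
  have hMpos : 0 < M := by
    apply div_pos (by positivity) hhalf
  have hMα : M * α = 1 + C * γ := by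
    rw [hM, div_mul_cancel₀ _ hhalf.ne']
  set M₁ : ℝ := M * Real.exp (C * γ) with hM₁
  have hM₁pos : 0 < M₁ := by positivity
  refine ⟨M₁, hM₁pos, ?_⟩
  intro z hz hz'
  -- continuity of z on [0,∞)
  have hzcont : ContinuousOn z (Set.Ici (0 : ℝ)) := fun x hx =>
    ((hz' x hx).continuousAt).continuousWithinAt
  -- derivative of log z
  set u : ℝ → ℝ := fun t => Real.log (z t) with hu
  have hu' : ∀ x ≥ (0 : ℝ), HasDerivAt u (b x - a x * z x) x := by
    intro x hx
    have h := (hz' x hx).log (hz x hx).ne'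
    rwa [mul_div_cancel_left₀ _ (hz x hx).ne'] at h
  -- integrability of the derivative
  have hInt_u' : ∀ s t : ℝ, 0 ≤ s → s ≤ t →
      IntervalIntegrable (fun x => b x - a x * z x) volume s t := by
    intro s t hs hst
    apply ContinuousOn.intervalIntegrable
    have hsub : Set.uIcc s t ⊆ Set.Ici (0 : ℝ) := by
      rw [uIcc_of_le hst]; exact fun x hx => le_trans hs hx.1
    exact ((hb_cont.mono hsub).sub ((ha_cont.mono hsub).mul (hzcont.mono hsub)))
  -- FTC for u
  have hFTC : ∀ s t : ℝ, 0 ≤ s → s ≤ t →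
      u t - u s = ∫ x in s..t, (b x - a x * z x) := by
    intro s t hs hst
    rw [intervalIntegral.integral_eq_sub_of_hasDerivAt (fun x hx => ?_) (hInt_u' s t hs hst)]
    rw [uIcc_of_le hst] at hx
    exact hu' x (le_trans hs hx.1)
  -- growth estimate
  have hGrow : ∀ s t : ℝ, 0 ≤ s → s ≤ t → u t ≤ u s + C * (t - s) := by
    intro s t hs hst
    have h1 : u t - u s ≤ ∫ x in s..t, C := by
      rw [hFTC s t hs hst]
      apply intervalIntegral.integral_mono_on hst (hInt_u' s t hs hst)
        intervalIntegrable_const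
      intro x hx
      have hx0 : (0 : ℝ) ≤ x := le_trans hs hx.1
      have h2 : 0 ≤ a x * z x := mul_nonneg (ha_nonneg x hx0) (hz x hx0).le
      have h3 : b x ≤ C := (le_abs_self _).trans (hC x hx0)
      linarith
    rw [intervalIntegral.integral_const, smul_eq_mul] at h1
    linarith [h1]
  -- decay estimate
  have hDecay : ∀ t ≥ T, (∀ x ∈ Set.Icc t (t + γ), M ≤ z x) → u (t + γ) ≤ u t - 1 := by
    intro t ht hMz
    have ht0 : (0 : ℝ) ≤ t := le_trans hT0 ht
    have hle : t ≤ t + γ := by linarith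
    have h1 : u (t + γ) - u t ≤ ∫ x in t..(t + γ), (C - M * a x) := by
      rw [hFTC t (t + γ) ht0 hle]
      apply intervalIntegral.integral_mono_on hle (hInt_u' t (t + γ) ht0 hle) ?_ ?_
      · apply ContinuousOn.intervalIntegrable
        have hsub : Set.uIcc t (t + γ) ⊆ Set.Ici (0 : ℝ) := by
          rw [uIcc_of_le hle]; exact fun x hx => le_trans ht0 hx.1
        exact continuousOn_const.sub (continuousOn_const.mul (ha_cont.mono hsub))
      · intro x hx
        have hx0 : (0 : ℝ) ≤ x := le_trans ht0 hx.1
        have h3 : b x ≤ C := (le_abs_self _).trans (hC x hx0)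
        have h4 : M * a x ≤ a x * z x := by
          rw [mul_comm]
          exact mul_le_mul_of_nonneg_left (hMz x hx) (ha_nonneg x hx0)
        linarith
    have h2 : (∫ x in t..(t + γ), (C - M * a x)) =
        C * γ - M * ∫ x in t..(t + γ), a x := by
      rw [intervalIntegral.integral_sub intervalIntegrable_const
        ((hInt_a t (t + γ) ht0 hle).const_mul M),
        intervalIntegral.integral_const_mul, intervalIntegral.integral_const, smul_eq_mul]
      ring
    have h3 : α ≤ ∫ x in t..(t + γ), a x := hTprop t ht
    have h4 : M * α ≤ M * ∫ x in t..(t + γ), a x :=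
      mul_le_mul_of_nonneg_left h3 hMpos.le
    rw [hMα] at h4
    linarith
  -- single backward step
  have hStep : ∀ t, T + γ ≤ t → M₁ < z t → Real.exp 1 * z t ≤ z (t - γ) := by
    intro t ht hzt
    have htγ0 : (0 : ℝ) ≤ t - γ := by linarith
    have ht0 : (0 : ℝ) ≤ t := by linarith
    have hMz : ∀ x ∈ Set.Icc (t - γ) t, M ≤ z x := by
      intro x hx
      have hx0 : (0 : ℝ) ≤ x := le_trans htγ0 hx.1
      have h1 : u t ≤ u x + C * (t - x) := hGrow x t hx0 hx.2
      have h2 : C * (t - x) ≤ C * γ :=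
        mul_le_mul_of_nonneg_left (by linarith [hx.1]) hC0
      have h3 : Real.log (z t) - C * γ ≤ Real.log (z x) := by
        simp only [hu] at h1 ⊢
        linarith
      have h4 : z t * Real.exp (-(C * γ)) ≤ z x := by
        have he := Real.exp_le_exp.mpr h3
        rw [Real.exp_sub, Real.exp_log (hz t ht0), Real.exp_log (hz x hx0)] at he
        rwa [Real.exp_neg, ← div_eq_mul_inv]
      have h5 : M₁ * Real.exp (-(C * γ)) < z t * Real.exp (-(C * γ)) :=
        mul_lt_mul_of_pos_right hzt (Real.exp_pos _)
      have h6 : M₁ * Real.exp (-(C * γ)) = M := by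
        rw [hM₁, mul_assoc, ← Real.exp_add, add_neg_cancel, Real.exp_zero, mul_one]
      linarith
    have hdec : u (t - γ + γ) ≤ u (t - γ) - 1 := by
      apply hDecay (t - γ) (by linarith)
      intro x hx
      apply hMz x
      constructor
      · exact hx.1
      · linarith [hx.2]
    rw [show t - γ + γ = t by ring] at hdec
    have h7 : Real.exp (u t + 1) ≤ Real.exp (u (t - γ)) := Real.exp_le_exp.mpr (by linarith)
    rw [Real.exp_add, hu] at h7
    simp only [Real.exp_log (hz t ht0), Real.exp_log (hz (t - γ) htγ0)] at h7
    calc Real.exp 1 * z t = z t * Real.exp 1 := by ring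
    _ ≤ z (t - γ) := h7
  -- iterated backward steps
  have hIter : ∀ k : ℕ, ∀ t : ℝ, T + (k : ℝ) * γ ≤ t → M₁ < z t →
      Real.exp (k : ℝ) * z t ≤ z (t - (k : ℝ) * γ) := by
    intro k
    induction k with
    | zero => intro t _ _; simp
    | succ k ih =>
      intro t ht hzt
      have hk0 : (0 : ℝ) ≤ (k : ℝ) := Nat.cast_nonneg k
      have ht' : T + γ ≤ t := by
        push_cast at ht
        nlinarith [hγ.le]
      have h1 : Real.exp 1 * z t ≤ z (t - γ) := hStep t ht' hzt
      have hzt' : M₁ < z (t - γ) := by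
        have he1 : (1 : ℝ) ≤ Real.exp 1 := by
          linarith [Real.add_one_le_exp (1 : ℝ)]
        nlinarith [hz t (by linarith [hT0] : (0:ℝ) ≤ t)]
      have ht'' : T + (k : ℝ) * γ ≤ t - γ := by
        push_cast at ht
        linarith
      have h2 := ih (t - γ) ht'' hzt'
      have h3 : t - γ - (k : ℝ) * γ = t - ((k : ℝ) + 1) * γ := by ring
      rw [h3] at h2
      have h4 : Real.exp ((k : ℝ) + 1) * z t = Real.exp (k : ℝ) * (Real.exp 1 * z t) := by
        rw [Real.exp_add]; ring
      push_cast
      rw [h4]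
      calc Real.exp (k : ℝ) * (Real.exp 1 * z t)
          ≤ Real.exp (k : ℝ) * z (t - γ) :=
            mul_le_mul_of_nonneg_left h1 (Real.exp_pos _).le
      _ ≤ z (t - ((k : ℝ) + 1) * γ) := h2
  -- bound on the compact [T, T+γ]
  obtain ⟨x₀, hx₀mem, hx₀⟩ := isCompact_Icc.exists_isMaxOn
    (Set.nonempty_Icc.mpr (by linarith : T ≤ T + γ))
    (hzcont.mono (fun x hx => le_trans hT0 hx.1))
  set K : ℝ := z x₀ with hK
  -- choose N with K < exp N * M₁
  obtain ⟨N, hN⟩ := exists_nat_gt (K / M₁)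
  have hKN : K < Real.exp (N : ℝ) * M₁ := by
    have h1 : K / M₁ < Real.exp (N : ℝ) := by
      calc K / M₁ < (N : ℝ) := hN
      _ ≤ Real.exp (N : ℝ) := by linarith [Real.add_one_le_exp ((N : ℝ))]
    calc K = K / M₁ * M₁ := by field_simp
    _ < Real.exp (N : ℝ) * M₁ := mul_lt_mul_of_pos_right h1 hM₁pos
  -- eventual bound
  have hevz : ∀ᶠ t in Filter.atTop, z t ≤ M₁ := by
    rw [Filter.eventually_atTop]
    refine ⟨T + (N : ℝ) * γ, fun t ht => ?_⟩
    by_contra hcon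
    push_neg at hcon
    have hN0 : (0 : ℝ) ≤ (N : ℝ) * γ := by positivity
    have htT : T ≤ t := by linarith
    set k : ℕ := ⌊(t - T) / γ⌋₊ with hk
    have hfrac0 : (0 : ℝ) ≤ (t - T) / γ := div_nonneg (by linarith) hγ.le
    have hk1 : (k : ℝ) ≤ (t - T) / γ := Nat.floor_le hfrac0
    have hk2 : (t - T) / γ < (k : ℝ) + 1 := Nat.lt_floor_add_one _
    have hkγ : (k : ℝ) * γ ≤ t - T := by
      rw [le_div_iff₀ hγ] at hk1
      · linarith
    have hkγ' : t - T < ((k : ℝ) + 1) * γ := by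
      rw [div_lt_iff₀ hγ] at hk2
      linarith
    have h1 : Real.exp (k : ℝ) * z t ≤ z (t - (k : ℝ) * γ) :=
      hIter k t (by linarith) hcon
    have hmem : t - (k : ℝ) * γ ∈ Set.Icc T (T + γ) := by
      constructor <;> [linarith; linarith]
    have h2 : z (t - (k : ℝ) * γ) ≤ K := hx₀ hmem
    have h3 : Real.exp (k : ℝ) * M₁ < Real.exp (N : ℝ) * M₁ := by
      calc Real.exp (k : ℝ) * M₁ < Real.exp (k : ℝ) * z t :=
          mul_lt_mul_of_pos_left hcon (Real.exp_pos _)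
      _ ≤ K := le_trans h1 h2
      _ < Real.exp (N : ℝ) * M₁ := hKN
    have h4 : (k : ℝ) < (N : ℝ) := by
      have := lt_of_mul_lt_mul_right h3 hM₁pos.le
      exact Real.exp_lt_exp.mp this
    have h5 : (k : ℝ) + 1 ≤ (N : ℝ) := by
      exact_mod_cast Nat.cast_lt.mp h4
    nlinarith
  -- conclude
  apply Filter.limsup_le_of_le ?_ hevz
  apply Filter.isCoboundedUnder_le_of_eventually_le Filter.atTop (x := 0)
  filter_upwards [Filter.eventually_ge_atTop (0 : ℝ)] with t ht
  exact (hz t ht).le
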